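/- Every monomial in the partic algebra PP_N is equal to a monomial in normal form, i.e. to a monomial of the shape a_{N-1}^{d_{N-1}} ⋯ a_3^{d_3} a_2^{d_2} a_1^{k_1} a_2^{k_2} ⋯ a_{N-1}^{k_{N-1}} with nonnegative integers d_i, k_i satisfying d_2 ≤ k_1 and d_i ≤ d_{i-1} + k_{i-1} for all 3 ≤ i ≤ N-1. -/

import Mathlib

inductive ParticRel (K : Type*) [CommRing K] (N : ℕ) :
    FreeAlgebra K (Fin (N - 1)) → FreeAlgebra K (Fin (N - 1)) → Prop
  | plac1 : ∀ i j : Fin (N - 1), (i : ℕ) = (j : ℕ) + 1 →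
      ParticRel K N (FreeAlgebra.ι K i * FreeAlgebra.ι K j * FreeAlgebra.ι K i)
        (FreeAlgebra.ι K i * FreeAlgebra.ι K i * FreeAlgebra.ι K j)
  | plac2 : ∀ i j : Fin (N - 1), (j : ℕ) = (i : ℕ) + 1 →
      ParticRel K N (FreeAlgebra.ι K i * FreeAlgebra.ι K j * FreeAlgebra.ι K i)
        (FreeAlgebra.ι K j * FreeAlgebra.ι K i * FreeAlgebra.ι K i)
  | comm : ∀ i j : Fin (N - 1), (i : ℕ) + 1 < (j : ℕ) →
      ParticRel K N (FreeAlgebra.ι K i * FreeAlgebra.ι K j)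
        (FreeAlgebra.ι K j * FreeAlgebra.ι K i)
  | partic : ∀ lo mid hi : Fin (N - 1), (mid : ℕ) = (lo : ℕ) + 1 → (hi : ℕ) = (mid : ℕ) + 1 →
      ParticRel K N
        (FreeAlgebra.ι K mid * FreeAlgebra.ι K lo * FreeAlgebra.ι K hi * FreeAlgebra.ι K mid)
        (FreeAlgebra.ι K hi * FreeAlgebra.ι K mid * FreeAlgebra.ι K lo * FreeAlgebra.ι K mid)

/-- The partic algebra `PP_N`, with generators `a_1, …, a_{N-1}`. -/
abbrev ParticAlgebra (K : Type*) [CommRing K] (N : ℕ) := RingQuot (ParticRel K N)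

/-- The generator `a_i` of the partic algebra, for `1 ≤ i ≤ N-1` (junk value `0`
outside that range). -/
noncomputable def ppa (K : Type*) [CommRing K] (N : ℕ) (i : ℕ) : ParticAlgebra K N :=
  if h : 1 ≤ i ∧ i ≤ N - 1 then
    RingQuot.mkAlgHom K (ParticRel K N) (FreeAlgebra.ι K ⟨i - 1, by omega⟩) else 0

/-- The normal-form monomial
`a_{N-1}^{d_{N-1}} ⋯ a_2^{d_2} · a_1^{e_1} a_2^{e_2} ⋯ a_{N-1}^{e_{N-1}}`
in the partic algebra. -/
noncomputable def nfMon (K : Type*) [CommRing K] (N : ℕ) (d e : ℕ → ℕ) : ParticAlgebra K N :=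
  ((List.range (N - 2)).map fun t => ppa K N (N - 1 - t) ^ d (N - 1 - t)).prod *
    ((List.range (N - 1)).map fun t => ppa K N (t + 1) ^ e (t + 1)).prod

section Abstract
variable {M : Type*} [Monoid M] (x y z : M)

lemma commL {M : Type*} [Semigroup M] {a b : M} (h : Commute a b) (w : M) :
    a * (b * w) = b * (a * w) := by rw [← mul_assoc, h.eq, mul_assoc]

/-- from r1 : `y x y = y y x` -/
lemma apow (r1 : y*x*y = y*y*x) : ∀ m, y^(m+1) * x = y * x * y^m := by
  intro m; induction m with
  | zero => simp
  | succ m ih =>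
    calc y^(m+2) * x = y * (y^(m+1) * x) := by rw [pow_succ']; simp only [mul_assoc]
      _ = y * (y * x * y^m) := by rw [ih]
      _ = y * y * x * y^m := by simp only [mul_assoc]
      _ = y * x * y * y^m := by rw [← r1]
      _ = y * x * y^(m+1) := by rw [pow_succ']; simp only [mul_assoc]

/-- from r2 : `x y x = y x x` -/
lemma peelP (r2 : x*y*x = y*x*x) : ∀ h, y * x^(h+1) = x^h * (y * x) := by
  intro h; induction h with
  | zero => simp
  | succ h ih =>
    calc y * x^(h+2) = y * x^(h+1) * x := by rw [pow_succ]; simp only [mul_assoc]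
      _ = x^h * (y * x) * x := by rw [ih]
      _ = x^h * (y * x * x) := by simp only [mul_assoc]
      _ = x^h * (x * y * x) := by rw [← r2]
      _ = x^(h+1) * (y * x) := by rw [pow_succ]; simp only [mul_assoc]

lemma Epow (r1 : y*x*y = y*y*x) : ∀ k, y * x * y^(k+1) = y^(k+2) * x := by
  intro k; induction k with
  | zero => simpa [pow_succ] using r1
  | succ k ih =>
    calc y * x * y^(k+2) = y * x * y^(k+1) * y := by rw [pow_succ]; simp only [mul_assoc]
      _ = y^(k+2) * x * y := by rw [ih]
      _ = y^(k+1) * (y * x * y) := by rw [pow_succ]; simp only [mul_assoc]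
      _ = y^(k+1) * (y * y * x) := by rw [r1]
      _ = y^(k+3) * x := by
          rw [show y^(k+3) = y^(k+1)*y*y by rw [← pow_succ, ← pow_succ]]
          simp only [mul_assoc]

lemma E2pow (r1 : y*x*y = y*y*x) (r2 : x*y*x = y*x*x) :
    ∀ h k, y * x^(h+1) * y^(k+1) = x^h * y^(k+2) * x := by
  intro h k
  calc y * x^(h+1) * y^(k+1) = x^h * (y * x) * y^(k+1) := by rw [peelP x y r2]
    _ = x^h * (y * x * y^(k+1)) := by simp only [mul_assoc]
    _ = x^h * (y^(k+2) * x) := by rw [Epow x y r1]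
    _ = x^h * y^(k+2) * x := by simp only [mul_assoc]

lemma Spow (r1 : y*x*y = y*y*x) (r2 : x*y*x = y*x*x) :
    ∀ m e, m ≤ e → x * y^m * x^e = y^m * x^(e+1) := by
  intro m; induction m with
  | zero => intro e _; simp [pow_succ']
  | succ m ih =>
    intro e hme
    obtain ⟨f, rfl⟩ : ∃ f, e = f + 1 := ⟨e - 1, by omega⟩
    calc x * y^(m+1) * x^(f+1) = x * (y^(m+1) * x) * x^f := by
          rw [pow_succ' x f]; simp only [mul_assoc]
      _ = x * (y * x * y^m) * x^f := by rw [apow x y r1]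
      _ = x * y * x * (y^m * x^f) := by simp only [mul_assoc]
      _ = y * x * x * (y^m * x^f) := by rw [r2]
      _ = y * x * (x * y^m * x^f) := by simp only [mul_assoc]
      _ = y * x * (y^m * x^(f+1)) := by rw [ih f (by omega)]
      _ = y * x * y^m * x^(f+1) := by simp only [mul_assoc]
      _ = y^(m+1) * x * x^(f+1) := by rw [← apow x y r1]
      _ = y^(m+1) * x^(f+2) := by
          rw [show x^(f+2) = x*x^(f+1) from pow_succ' x (f+1)]; simp only [mul_assoc]

lemma Tpow (r1 : y*x*y = y*y*x) (r2 : x*y*x = y*x*x) :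
    ∀ e m, x^e * y^(m+1) * x = y * x^(e+1) * y^m := by
  intro e m
  calc x^e * y^(m+1) * x = x^e * (y^(m+1) * x) := by simp only [mul_assoc]
    _ = x^e * (y * x * y^m) := by rw [apow x y r1]
    _ = x^e * (y * x) * y^m := by simp only [mul_assoc]
    _ = y * x^(e+1) * y^m := by rw [← peelP x y r2]

end Abstract

section Abstract2
variable {M : Type*} [Monoid M] (x y z : M)

lemma EpowAll (r1 : y*x*y = y*y*x) : ∀ k, y * x * y^k = y^(k+1) * x := by
  intro k; cases k with
  | zero => simp
  | succ k => exact Epow x y r1 k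

lemma E2All (r1 : y*x*y = y*y*x) (r2 : x*y*x = y*x*x) :
    ∀ h k, y * x^(h+1) * y^k = x^h * y^(k+1) * x := by
  intro h k; cases k with
  | zero => simpa [mul_assoc] using peelP x y r2 h
  | succ k => exact E2pow x y r1 r2 h k

lemma ppcore (r1 : y*x*y = y*y*x) (r2 : x*y*x = y*x*x) (cxz : Commute x z)
    (r4 : y*x*z*y = z*y*x*y) :
    ∀ C b, b ≤ C → y^b * x^C * z * y = z * y^b * x^C * y := by
  intro C; induction C with
  | zero =>
    intro b hb
    obtain rfl : b = 0 := by omega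
    simp [mul_assoc, cxz.symm.eq]
  | succ f ih =>
    intro b hb
    rcases Nat.lt_or_ge b (f+1) with hbf | hbf
    · have hS := Spow x y r1 r2 b f (by omega)
      calc y^b * x^(f+1) * z * y = x * y^b * x^f * z * y := by
            rw [← hS]
        _ = x * (y^b * x^f * z * y) := by simp only [mul_assoc]
        _ = x * (z * y^b * x^f * y) := by rw [ih b (by omega)]
        _ = x * z * (y^b * x^f * y) := by simp only [mul_assoc]
        _ = z * x * (y^b * x^f * y) := by rw [cxz.eq]
        _ = z * (x * y^b * x^f) * y := by simp only [mul_assoc]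
        _ = z * (y^b * x^(f+1)) * y := by rw [hS]
        _ = z * y^b * x^(f+1) * y := by simp only [mul_assoc]
    · obtain rfl : b = f + 1 := by omega
      cases f with
      | zero => simpa using r4
      | succ g =>
        calc y^(g+2) * x^(g+2) * z * y
            = y^(g+2) * x * x^(g+1) * z * y := by
              rw [show x^(g+2) = x * x^(g+1) from pow_succ' x (g+1)]
              simp only [mul_assoc]
          _ = y * x * y^(g+1) * x^(g+1) * z * y := by rw [apow x y r1 (g+1)]
          _ = y * x * (y^(g+1) * x^(g+1) * z * y) := by simp only [mul_assoc]
          _ = y * x * (z * y^(g+1) * x^(g+1) * y) := by rw [ih (g+1) (by omega)]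
          _ = y * x * z * y * (y^g * x^(g+1) * y) := by
              rw [show y^(g+1) = y * y^g from pow_succ' y g]
              simp only [mul_assoc]
          _ = z * y * x * y * (y^g * x^(g+1) * y) := by rw [r4]
          _ = z * (y * x * y^(g+1)) * x^(g+1) * y := by
              rw [show y^(g+1) = y * y^g from pow_succ' y g]
              simp only [mul_assoc]
          _ = z * (y^(g+2) * x) * x^(g+1) * y := by rw [Epow x y r1 g]
          _ = z * y^(g+2) * x^(g+2) * y := by
              rw [show x^(g+2) = x * x^(g+1) from pow_succ' x (g+1)]
              simp only [mul_assoc]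

end Abstract2

namespace ParticProof

variable {K : Type*} [CommRing K] {N : ℕ}

lemma ppa_eq (i : ℕ) (h1 : 1 ≤ i) (h2 : i ≤ N - 1) (hf : i - 1 < N - 1) :
    ppa K N i = RingQuot.mkAlgHom K (ParticRel K N) (FreeAlgebra.ι K ⟨i - 1, hf⟩) :=
  dif_pos ⟨h1, h2⟩

lemma rel_plac1 (i : ℕ) (h1 : 1 ≤ i) (h2 : i + 1 ≤ N - 1) :
    ppa K N (i+1) * ppa K N i * ppa K N (i+1)
      = ppa K N (i+1) * ppa K N (i+1) * ppa K N i := by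
  have hf1 : i - 1 < N - 1 := by omega
  have hf2 : (i+1) - 1 < N - 1 := by omega
  rw [ppa_eq i h1 (by omega) hf1, ppa_eq (i+1) (by omega) h2 hf2]
  have h := RingQuot.mkAlgHom_rel K
    (ParticRel.plac1 (K := K) (N := N) ⟨(i+1)-1, hf2⟩ ⟨i-1, hf1⟩ (by simp; omega))
  simpa only [map_mul] using h

lemma rel_plac2 (i : ℕ) (h1 : 1 ≤ i) (h2 : i + 1 ≤ N - 1) :
    ppa K N i * ppa K N (i+1) * ppa K N i
      = ppa K N (i+1) * ppa K N i * ppa K N i := by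
  have hf1 : i - 1 < N - 1 := by omega
  have hf2 : (i+1) - 1 < N - 1 := by omega
  rw [ppa_eq i h1 (by omega) hf1, ppa_eq (i+1) (by omega) h2 hf2]
  have h := RingQuot.mkAlgHom_rel K
    (ParticRel.plac2 (K := K) (N := N) ⟨i-1, hf1⟩ ⟨(i+1)-1, hf2⟩ (by simp; omega))
  simpa only [map_mul] using h

lemma rel_comm (i j : ℕ) (h1 : 1 ≤ i) (h : i + 2 ≤ j) (h2 : j ≤ N - 1) :
    Commute (ppa K N i) (ppa K N j) := by
  have hf1 : i - 1 < N - 1 := by omega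
  have hf2 : j - 1 < N - 1 := by omega
  rw [ppa_eq i h1 (by omega) hf1, ppa_eq j (by omega) h2 hf2]
  have h := RingQuot.mkAlgHom_rel K
    (ParticRel.comm (K := K) (N := N) ⟨i-1, hf1⟩ ⟨j-1, hf2⟩ (by simp; omega))
  simp only [map_mul] at h
  exact h

lemma rel_partic (i : ℕ) (h1 : 2 ≤ i) (h2 : i + 1 ≤ N - 1) :
    ppa K N i * ppa K N (i-1) * ppa K N (i+1) * ppa K N i
      = ppa K N (i+1) * ppa K N i * ppa K N (i-1) * ppa K N i := by
  have hf0 : (i-1) - 1 < N - 1 := by omega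
  have hf1 : i - 1 < N - 1 := by omega
  have hf2 : (i+1) - 1 < N - 1 := by omega
  rw [ppa_eq (i-1) (by omega) (by omega) hf0, ppa_eq i (by omega) (by omega) hf1,
    ppa_eq (i+1) (by omega) h2 hf2]
  have h := RingQuot.mkAlgHom_rel K
    (ParticRel.partic (K := K) (N := N) ⟨(i-1)-1, hf0⟩ ⟨i-1, hf1⟩ ⟨(i+1)-1, hf2⟩
      (by simp; omega) (by simp; omega))
  simpa only [map_mul] using h


noncomputable def incP (K : Type*) [CommRing K] (N : ℕ) (e : ℕ → ℕ) : ℕ → ParticAlgebra K N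
  | 0 => 1
  | k+1 => incP K N e k * ppa K N (k+1) ^ e (k+1)

noncomputable def decP (K : Type*) [CommRing K] (N : ℕ) (d : ℕ → ℕ) : ℕ → ParticAlgebra K N
  | 0 => 1
  | 1 => 1
  | k+2 => ppa K N (k+2) ^ d (k+2) * decP K N d (k+1)

noncomputable def incFrom (K : Type*) [CommRing K] (N : ℕ) (e : ℕ → ℕ) (k : ℕ) :
    ℕ → ParticAlgebra K N
  | 0 => 1
  | m+1 => if m+1 ≤ k then 1 else incFrom K N e k m * ppa K N (m+1) ^ e (m+1)

noncomputable def decFrom (K : Type*) [CommRing K] (N : ℕ) (d : ℕ → ℕ) (k : ℕ) :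
    ℕ → ParticAlgebra K N
  | 0 => 1
  | m+1 => if m+1 ≤ k then 1 else ppa K N (m+1) ^ d (m+1) * decFrom K N d k m

lemma incP_succ (e : ℕ → ℕ) (k : ℕ) :
    incP K N e (k+1) = incP K N e k * ppa K N (k+1) ^ e (k+1) := rfl

lemma decP_succ (d : ℕ → ℕ) (m : ℕ) (h : 2 ≤ m) :
    decP K N d m = ppa K N m ^ d m * decP K N d (m-1) := by
  obtain ⟨k, rfl⟩ : ∃ k, m = k + 2 := ⟨m - 2, by omega⟩
  rfl

lemma incFrom_le (e : ℕ → ℕ) (k m : ℕ) (h : m ≤ k) : incFrom K N e k m = 1 := by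
  cases m with
  | zero => rfl
  | succ m => rw [incFrom, if_pos h]

lemma incFrom_succ (e : ℕ → ℕ) (k m : ℕ) (h : k ≤ m) :
    incFrom K N e k (m+1) = incFrom K N e k m * ppa K N (m+1) ^ e (m+1) := by
  rw [incFrom, if_neg (by omega)]

lemma decFrom_le (d : ℕ → ℕ) (k m : ℕ) (h : m ≤ k) : decFrom K N d k m = 1 := by
  cases m with
  | zero => rfl
  | succ m => rw [decFrom, if_pos h]

lemma decFrom_succ (d : ℕ → ℕ) (k m : ℕ) (h : k ≤ m) :
    decFrom K N d k (m+1) = ppa K N (m+1) ^ d (m+1) * decFrom K N d k m := by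
  rw [decFrom, if_neg (by omega)]

lemma incP_split (e : ℕ → ℕ) : ∀ m k, k ≤ m →
    incP K N e m = incP K N e k * incFrom K N e k m := by
  intro m; induction m with
  | zero =>
    intro k hk
    obtain rfl : k = 0 := by omega
    rw [incFrom_le e 0 0 le_rfl, mul_one]
  | succ m ih =>
    intro k hk
    rcases Nat.lt_or_ge k (m+1) with h | h
    · rw [incP_succ, ih k (by omega), incFrom_succ e k m (by omega), mul_assoc]
    · obtain rfl : k = m + 1 := by omega
      rw [incFrom_le e (m+1) (m+1) le_rfl, mul_one]

lemma decP_split (d : ℕ → ℕ) : ∀ m k, 1 ≤ k → k ≤ m →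
    decP K N d m = decFrom K N d k m * decP K N d k := by
  intro m; induction m with
  | zero => intro k h1 h2; omega
  | succ m ih =>
    intro k h1 h2
    rcases Nat.lt_or_ge k (m+1) with h | h
    · rw [decP_succ d (m+1) (by omega), decFrom_succ d k m (by omega)]
      simp only [Nat.add_sub_cancel]
      rw [ih k h1 (by omega), mul_assoc]
    · obtain rfl : k = m + 1 := by omega
      rw [decFrom_le d (m+1) (m+1) le_rfl, one_mul]

lemma incP_congr (e e' : ℕ → ℕ) : ∀ k, (∀ i, 1 ≤ i → i ≤ k → e i = e' i) →
    incP K N e k = incP K N e' k := by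
  intro k; induction k with
  | zero => intro _; rfl
  | succ k ih => intro h; rw [incP_succ, incP_succ, ih (fun i h1 h2 => h i h1 (by omega)),
      h (k+1) (by omega) le_rfl]

lemma decP_congr (d d' : ℕ → ℕ) : ∀ k, (∀ i, 2 ≤ i → i ≤ k → d i = d' i) →
    decP K N d k = decP K N d' k := by
  intro k
  induction k using Nat.strong_induction_on with
  | _ k ih =>
    intro h
    match k with
    | 0 => rfl
    | 1 => rfl
    | (k+2) =>
      rw [decP, decP, ih (k+1) (by omega) (fun i h1 h2 => h i h1 (by omega)),
        h (k+2) (by omega) le_rfl]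

lemma incFrom_congr (e e' : ℕ → ℕ) (k : ℕ) : ∀ m, (∀ i, k+1 ≤ i → i ≤ m → e i = e' i) →
    incFrom K N e k m = incFrom K N e' k m := by
  intro m; induction m with
  | zero => intro _; rfl
  | succ m ih =>
    intro h
    rcases Nat.lt_or_ge m k with hc | hc
    · rw [incFrom_le e k (m+1) (by omega), incFrom_le e' k (m+1) (by omega)]
    · rw [incFrom_succ e k m hc, incFrom_succ e' k m hc,
        ih (fun i h1 h2 => h i h1 (by omega)), h (m+1) (by omega) le_rfl]

lemma decFrom_congr (d d' : ℕ → ℕ) (k : ℕ) : ∀ m, (∀ i, k+1 ≤ i → i ≤ m → d i = d' i) →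
    decFrom K N d k m = decFrom K N d' k m := by
  intro m; induction m with
  | zero => intro _; rfl
  | succ m ih =>
    intro h
    rcases Nat.lt_or_ge m k with hc | hc
    · rw [decFrom_le d k (m+1) (by omega), decFrom_le d' k (m+1) (by omega)]
    · rw [decFrom_succ d k m hc, decFrom_succ d' k m hc,
        ih (fun i h1 h2 => h i h1 (by omega)), h (m+1) (by omega) le_rfl]

lemma comm_incP (e : ℕ → ℕ) (i : ℕ) (hi : i ≤ N - 1) : ∀ k, k + 2 ≤ i →
    Commute (ppa K N i) (incP K N e k) := by
  intro k; induction k with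
  | zero => intro _; exact Commute.one_right _
  | succ k ih =>
    intro h
    exact (ih (by omega)).mul_right
      (((rel_comm (k+1) i (by omega) (by omega) hi).symm).pow_right _)

lemma comm_decP (d : ℕ → ℕ) (i : ℕ) (hi : i ≤ N - 1) : ∀ k, k + 2 ≤ i →
    Commute (ppa K N i) (decP K N d k) := by
  intro k
  induction k using Nat.strong_induction_on with
  | _ k ih =>
    intro h
    match k with
    | 0 => exact Commute.one_right _
    | 1 => exact Commute.one_right _
    | (k+2) =>
      rw [decP]
      exact (((rel_comm (k+2) i (by omega) (by omega) hi).symm).pow_right _).mul_right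
        (ih (k+1) (by omega) (by omega))

lemma comm_incFrom (e : ℕ → ℕ) (i k : ℕ) (hi : 1 ≤ i) (hik : i + 2 ≤ k + 1) :
    ∀ m, m ≤ N - 1 → Commute (ppa K N i) (incFrom K N e k m) := by
  intro m; induction m with
  | zero => intro _; exact Commute.one_right _
  | succ m ih =>
    intro hm
    rcases Nat.lt_or_ge m k with hc | hc
    · rw [incFrom_le e k (m+1) (by omega)]; exact Commute.one_right _
    · rw [incFrom_succ e k m hc]
      exact (ih (by omega)).mul_right
        ((rel_comm i (m+1) hi (by omega) hm).pow_right _)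

lemma comm_decFrom (d : ℕ → ℕ) (i k : ℕ) (hi : 1 ≤ i) (hik : i + 2 ≤ k + 1) :
    ∀ m, m ≤ N - 1 → Commute (ppa K N i) (decFrom K N d k m) := by
  intro m; induction m with
  | zero => intro _; exact Commute.one_right _
  | succ m ih =>
    intro hm
    rcases Nat.lt_or_ge m k with hc | hc
    · rw [decFrom_le d k (m+1) (by omega)]; exact Commute.one_right _
    · rw [decFrom_succ d k m hc]
      exact ((rel_comm i (m+1) hi (by omega) hm).pow_right _).mul_right
        (ih (by omega))

lemma incP_succ' (e : ℕ → ℕ) (q : ℕ) (h : 1 ≤ q) :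
    incP K N e q = incP K N e (q-1) * ppa K N q ^ e q := by
  obtain ⟨r, rfl⟩ : ∃ r, q = r + 1 := ⟨q - 1, by omega⟩
  rfl

lemma Qp : ∀ p, 1 ≤ p → p ≤ N - 1 → ∀ (d e : ℕ → ℕ) (c' : ℕ),
    ∃ X Y : ParticAlgebra K N,
      (∀ m, p + 1 ≤ m → m ≤ N - 1 → Commute (ppa K N m) X) ∧
      (∀ m, p + 1 ≤ m → m ≤ N - 1 → Commute (ppa K N m) Y) ∧
      ppa K N p * (decP K N d (p-1) * incP K N e (p-1)) * ppa K N p ^ c'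
        = X * ppa K N p ^ (c'+1) * Y := by
  intro p
  induction p with
  | zero => intro h; omega
  | succ q ih =>
    intro _ hpn d e c'
    simp only [Nat.add_sub_cancel]
    rcases Nat.lt_or_ge q 1 with hq1 | hq1
    · -- p = 1
      obtain rfl : q = 0 := by omega
      refine ⟨1, 1, fun _ _ _ => Commute.one_right _, fun _ _ _ => Commute.one_right _, ?_⟩
      show ppa K N 1 * ((1 : ParticAlgebra K N) * 1) * ppa K N 1 ^ c' = _
      simp [pow_succ']
    · -- p = q + 1, q ≥ 1
      have hqn : q + 1 ≤ N - 1 := hpn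
      have r1 := rel_plac1 (K := K) (N := N) q hq1 hqn
      have r2 := rel_plac2 (K := K) (N := N) q hq1 hqn
      have hcm : Commute (ppa K N (q+1)) (decP K N d (q-1) * incP K N e (q-1)) :=
        (comm_decP d (q+1) hqn (q-1) (by omega)).mul_right
          (comm_incP e (q+1) hqn (q-1) (by omega))
      obtain ⟨G, H, hGH⟩ : ∃ G H, decP K N d q * incP K N e q
          = ppa K N q ^ G * ((decP K N d (q-1) * incP K N e (q-1)) * ppa K N q ^ H) := by
        rcases Nat.lt_or_ge q 2 with hq2 | hq2
        · obtain rfl : q = 1 := by omega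
          exact ⟨0, e 1, by simp [decP, incP]⟩
        · refine ⟨d q, e q, ?_⟩
          rw [decP_succ d q hq2, incP_succ' e q hq1]
          simp only [mul_assoc]
      rw [hGH]
      set mid := decP K N d (q-1) * incP K N e (q-1) with hmid
      cases G with
      | zero =>
        cases H with
        | zero =>
          refine ⟨mid, 1, ?_, fun _ _ _ => Commute.one_right _, ?_⟩
          · intro m hm1 hm2
            exact (comm_decP d m hm2 (q-1) (by omega)).mul_right
              (comm_incP e m hm2 (q-1) (by omega))
          · calc ppa K N (q+1) * (ppa K N q ^ 0 * (mid * ppa K N q ^ 0)) * ppa K N (q+1) ^ c'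
                = ppa K N (q+1) * mid * ppa K N (q+1) ^ c' := by
                  simp only [pow_zero, one_mul, mul_one]
              _ = mid * ppa K N (q+1) * ppa K N (q+1) ^ c' := by rw [hcm.eq]
              _ = mid * ppa K N (q+1) ^ (c'+1) * 1 := by
                  rw [mul_one, pow_succ']; simp only [mul_assoc]
        | succ h =>
          refine ⟨mid * ppa K N q ^ h, ppa K N q, ?_, ?_, ?_⟩
          · intro m hm1 hm2
            exact ((comm_decP d m hm2 (q-1) (by omega)).mul_right
              (comm_incP e m hm2 (q-1) (by omega))).mul_right
              ((rel_comm q m (by omega) (by omega) hm2).symm.pow_right _)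
          · intro m hm1 hm2
            exact (rel_comm q m (by omega) (by omega) hm2).symm
          · calc ppa K N (q+1) * (ppa K N q ^ 0 * (mid * ppa K N q ^ (h+1))) * ppa K N (q+1) ^ c'
                = ppa K N (q+1) * mid * (ppa K N q ^ (h+1) * ppa K N (q+1) ^ c') := by
                  simp only [pow_zero, one_mul, mul_assoc]
              _ = mid * (ppa K N (q+1) * ppa K N q ^ (h+1) * ppa K N (q+1) ^ c') := by
                  rw [hcm.eq]; simp only [mul_assoc]
              _ = mid * (ppa K N q ^ h * ppa K N (q+1) ^ (c'+1) * ppa K N q) := by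
                  rw [E2All (ppa K N q) (ppa K N (q+1)) r1 r2 h c']
              _ = mid * ppa K N q ^ h * ppa K N (q+1) ^ (c'+1) * ppa K N q := by
                  simp only [mul_assoc]
      | succ g =>
        cases H with
        | zero =>
          refine ⟨ppa K N q ^ g, ppa K N q * mid, ?_, ?_, ?_⟩
          · intro m hm1 hm2
            exact (rel_comm q m (by omega) (by omega) hm2).symm.pow_right _
          · intro m hm1 hm2
            exact ((rel_comm q m (by omega) (by omega) hm2).symm).mul_right
              ((comm_decP d m hm2 (q-1) (by omega)).mul_right
                (comm_incP e m hm2 (q-1) (by omega)))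
          · have hcmp : Commute (ppa K N (q+1) ^ c') mid :=
              (hcm.pow_left c').symm.symm
            calc ppa K N (q+1) * (ppa K N q ^ (g+1) * (mid * ppa K N q ^ 0)) * ppa K N (q+1) ^ c'
                = ppa K N (q+1) * ppa K N q ^ (g+1) * (mid * ppa K N (q+1) ^ c') := by
                  simp only [pow_zero, mul_one, mul_assoc]
              _ = ppa K N q ^ g * (ppa K N (q+1) * ppa K N q) * (mid * ppa K N (q+1) ^ c') := by
                  rw [peelP (ppa K N q) (ppa K N (q+1)) r2 g]
              _ = ppa K N q ^ g * (ppa K N (q+1) * ppa K N q) * (ppa K N (q+1) ^ c' * mid) := by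
                  rw [(hcm.pow_left c').eq]
              _ = ppa K N q ^ g * (ppa K N (q+1) * ppa K N q * ppa K N (q+1) ^ c') * mid := by
                  simp only [mul_assoc]
              _ = ppa K N q ^ g * (ppa K N (q+1) ^ (c'+1) * ppa K N q) * mid := by
                  rw [EpowAll (ppa K N q) (ppa K N (q+1)) r1 c']
              _ = ppa K N q ^ g * ppa K N (q+1) ^ (c'+1) * (ppa K N q * mid) := by
                  simp only [mul_assoc]
        | succ h =>
          obtain ⟨X', Y', hX', hY', heq'⟩ := ih hq1 (by omega) d e (h+1)
          rw [← hmid] at heq'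
          refine ⟨ppa K N q ^ g * X' * ppa K N q ^ (h+1), ppa K N q * Y', ?_, ?_, ?_⟩
          · intro m hm1 hm2
            exact (((rel_comm q m (by omega) (by omega) hm2).symm.pow_right _).mul_right
              (hX' m (by omega) hm2)).mul_right
              ((rel_comm q m (by omega) (by omega) hm2).symm.pow_right _)
          · intro m hm1 hm2
            exact ((rel_comm q m (by omega) (by omega) hm2).symm).mul_right
              (hY' m (by omega) hm2)
          · have hy : Commute (ppa K N (q+1)) X' := hX' (q+1) (by omega) hqn
            have hyc : Commute (ppa K N (q+1) ^ c') Y' := (hY' (q+1) (by omega) hqn).pow_left c'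
            calc ppa K N (q+1) * (ppa K N q ^ (g+1) * (mid * ppa K N q ^ (h+1))) * ppa K N (q+1) ^ c'
                = ppa K N (q+1) * ppa K N q ^ (g+1) * (mid * ppa K N q ^ (h+1) * ppa K N (q+1) ^ c') := by
                  simp only [mul_assoc]
              _ = ppa K N q ^ g * (ppa K N (q+1) * ppa K N q) * (mid * ppa K N q ^ (h+1) * ppa K N (q+1) ^ c') := by
                  rw [peelP (ppa K N q) (ppa K N (q+1)) r2 g]
              _ = ppa K N q ^ g * ppa K N (q+1) * (ppa K N q * mid * ppa K N q ^ (h+1)) * ppa K N (q+1) ^ c' := by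
                  simp only [mul_assoc]
              _ = ppa K N q ^ g * ppa K N (q+1) * (X' * ppa K N q ^ (h+2) * Y') * ppa K N (q+1) ^ c' := by
                  rw [heq']
              _ = ppa K N q ^ g * (ppa K N (q+1) * X') * (ppa K N q ^ (h+2) * (Y' * ppa K N (q+1) ^ c')) := by
                  simp only [mul_assoc]
              _ = ppa K N q ^ g * (X' * ppa K N (q+1)) * (ppa K N q ^ (h+2) * (ppa K N (q+1) ^ c' * Y')) := by
                  rw [hy.eq, hyc.symm.eq]
              _ = ppa K N q ^ g * X' * (ppa K N (q+1) * ppa K N q ^ (h+2) * ppa K N (q+1) ^ c') * Y' := by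
                  simp only [mul_assoc]
              _ = ppa K N q ^ g * X' * (ppa K N q ^ (h+1) * ppa K N (q+1) ^ (c'+1) * ppa K N q) * Y' := by
                  rw [E2All (ppa K N q) (ppa K N (q+1)) r1 r2 (h+1) c']
              _ = ppa K N q ^ g * X' * ppa K N q ^ (h+1) * ppa K N (q+1) ^ (c'+1) * (ppa K N q * Y') := by
                  simp only [mul_assoc]

lemma core (i : ℕ) (h3 : i + 3 ≤ N - 1) :
    ∀ b c c' (d e : ℕ → ℕ), b ≤ c + c' →
    ppa K N (i+2) ^ b * (ppa K N (i+1) ^ c * (decP K N d i * incP K N e i) * ppa K N (i+1) ^ c')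
        * ppa K N (i+3) * ppa K N (i+2)
      = ppa K N (i+3) * (ppa K N (i+2) ^ b
          * (ppa K N (i+1) ^ c * (decP K N d i * incP K N e i) * ppa K N (i+1) ^ c')
          * ppa K N (i+2)) := by
  have r1 : ppa K N (i+2) * ppa K N (i+1) * ppa K N (i+2)
      = ppa K N (i+2) * ppa K N (i+2) * ppa K N (i+1) :=
    rel_plac1 (i+1) (by omega) (by omega)
  have r2 : ppa K N (i+1) * ppa K N (i+2) * ppa K N (i+1)
      = ppa K N (i+2) * ppa K N (i+1) * ppa K N (i+1) :=
    rel_plac2 (i+1) (by omega) (by omega)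
  have cxz : Commute (ppa K N (i+1)) (ppa K N (i+3)) :=
    rel_comm (i+1) (i+3) (by omega) (by omega) (by omega)
  have r4 : ppa K N (i+2) * ppa K N (i+1) * ppa K N (i+3) * ppa K N (i+2)
      = ppa K N (i+3) * ppa K N (i+2) * ppa K N (i+1) * ppa K N (i+2) :=
    rel_partic (i+2) (by omega) (by omega)
  have hpc := ppcore (ppa K N (i+1)) (ppa K N (i+2)) (ppa K N (i+3)) r1 r2 cxz r4
  intro b
  induction b using Nat.strong_induction_on with
  | _ b ihb =>
    intro c c' d e hb
    have hmidy : Commute (ppa K N (i+2)) (decP K N d i * incP K N e i) :=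
      (comm_decP d (i+2) (by omega) i (by omega)).mul_right
        (comm_incP e (i+2) (by omega) i (by omega))
    have hmidz : Commute (ppa K N (i+3)) (decP K N d i * incP K N e i) :=
      (comm_decP d (i+3) (by omega) i (by omega)).mul_right
        (comm_incP e (i+3) (by omega) i (by omega))
    generalize hG : decP K N d i * incP K N e i = mid at hmidy hmidz ⊢
    match b, hb with
    | 0, hb =>
      have hW : Commute (ppa K N (i+3))
          (ppa K N (i+1) ^ c * mid * ppa K N (i+1) ^ c') :=
        ((cxz.symm.pow_right c).mul_right hmidz).mul_right (cxz.symm.pow_right c')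
      calc ppa K N (i+2) ^ 0 * (ppa K N (i+1) ^ c * mid * ppa K N (i+1) ^ c')
              * ppa K N (i+3) * ppa K N (i+2)
          = (ppa K N (i+1) ^ c * mid * ppa K N (i+1) ^ c')
              * ppa K N (i+3) * ppa K N (i+2) := by rw [pow_zero, one_mul]
        _ = ppa K N (i+3) * ((ppa K N (i+1) ^ c * mid * ppa K N (i+1) ^ c')
              * ppa K N (i+2)) := by rw [hW.symm.eq]; simp only [mul_assoc]
        _ = ppa K N (i+3) * (ppa K N (i+2) ^ 0
              * (ppa K N (i+1) ^ c * mid * ppa K N (i+1) ^ c')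
              * ppa K N (i+2)) := by rw [pow_zero, one_mul]
    | (b'+1), hb =>
      match c, hb with
      | 0, hb =>
        have hmyb : Commute (ppa K N (i+2) ^ (b'+1)) mid :=
          hmidy.pow_left _
        calc ppa K N (i+2) ^ (b'+1) * (ppa K N (i+1) ^ 0 * mid * ppa K N (i+1) ^ c')
                * ppa K N (i+3) * ppa K N (i+2)
            = ppa K N (i+2) ^ (b'+1) * mid
                * (ppa K N (i+1) ^ c' * ppa K N (i+3) * ppa K N (i+2)) := by
              rw [pow_zero, one_mul]; simp only [mul_assoc]
          _ = mid
                * (ppa K N (i+2) ^ (b'+1) * ppa K N (i+1) ^ c' * ppa K N (i+3) * ppa K N (i+2)) := by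
              rw [← mul_assoc, hmyb.eq]; simp only [mul_assoc]
          _ = mid
                * (ppa K N (i+3) * ppa K N (i+2) ^ (b'+1) * ppa K N (i+1) ^ c' * ppa K N (i+2)) := by
              rw [hpc c' (b'+1) (by omega)]
          _ = ppa K N (i+3) * (mid
                * (ppa K N (i+2) ^ (b'+1) * (ppa K N (i+1) ^ c' * ppa K N (i+2)))) := by
              simp only [mul_assoc]; rw [commL hmidz]
          _ = ppa K N (i+3) * (ppa K N (i+2) ^ (b'+1)
                * (mid * (ppa K N (i+1) ^ c' * ppa K N (i+2)))) := by
              rw [commL hmyb]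
          _ = ppa K N (i+3) * (ppa K N (i+2) ^ (b'+1)
                * (ppa K N (i+1) ^ 0 * mid * ppa K N (i+1) ^ c')
                * ppa K N (i+2)) := by rw [pow_zero, one_mul]; simp only [mul_assoc]
      | (c''+1), hb =>
        cases b' with
        | zero =>
          -- b = 1 : final boss, via Qp
          obtain ⟨X, Y, hX, hY, heq0⟩ := Qp (K := K) (N := N) (i+1) (by omega) (by omega) d e c'
          have heq : ppa K N (i+1) * mid * ppa K N (i+1) ^ c'
              = X * ppa K N (i+1) ^ (c'+1) * Y := by rw [← hG]; exact heq0
          have hXy : Commute (ppa K N (i+2)) X := hX (i+2) (by omega) (by omega)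
          have hXz : Commute (ppa K N (i+3)) X := hX (i+3) (by omega) (by omega)
          have hYy : Commute (ppa K N (i+2)) Y := hY (i+2) (by omega) (by omega)
          have hYz : Commute (ppa K N (i+3)) Y := hY (i+3) (by omega) (by omega)
          have fb : ppa K N (i+2) * (ppa K N (i+1) * mid * ppa K N (i+1) ^ c')
                * ppa K N (i+3) * ppa K N (i+2)
              = ppa K N (i+3) * (ppa K N (i+2)
                  * (ppa K N (i+1) * mid * ppa K N (i+1) ^ c')
                  * ppa K N (i+2)) := by
            calc ppa K N (i+2) * (ppa K N (i+1) * mid * ppa K N (i+1) ^ c')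
                * ppa K N (i+3) * ppa K N (i+2)
                = ppa K N (i+2) * (X * ppa K N (i+1) ^ (c'+1) * Y)
                  * ppa K N (i+3) * ppa K N (i+2) := by rw [heq]
              _ = ppa K N (i+2) * X * (ppa K N (i+1) ^ (c'+1) * (Y * ppa K N (i+3) * ppa K N (i+2))) := by
                  simp only [mul_assoc]
              _ = X * ppa K N (i+2) * (ppa K N (i+1) ^ (c'+1) * (ppa K N (i+3) * ppa K N (i+2) * Y)) := by
                  rw [hXy.symm.eq, hYz.symm.eq]
                  simp only [mul_assoc]
                  rw [hYy.symm.eq]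
              _ = X * (ppa K N (i+2) ^ 1 * ppa K N (i+1) ^ (c'+1) * ppa K N (i+3) * ppa K N (i+2)) * Y := by
                  rw [pow_one]; simp only [mul_assoc]
              _ = X * (ppa K N (i+3) * ppa K N (i+2) ^ 1 * ppa K N (i+1) ^ (c'+1) * ppa K N (i+2)) * Y := by
                  rw [hpc (c'+1) 1 (by omega)]
              _ = ppa K N (i+3) * (ppa K N (i+2) * (X * ppa K N (i+1) ^ (c'+1) * Y) * ppa K N (i+2)) := by
                  rw [pow_one]
                  simp only [mul_assoc]
                  rw [commL hXz.symm, commL hXy.symm, hYy.eq]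
              _ = ppa K N (i+3) * (ppa K N (i+2)
                  * (ppa K N (i+1) * mid * ppa K N (i+1) ^ c')
                  * ppa K N (i+2)) := by rw [heq]
          have hcz : Commute (ppa K N (i+3)) (ppa K N (i+1) ^ c'') := cxz.symm.pow_right c''
          calc ppa K N (i+2) ^ 1 * (ppa K N (i+1) ^ (c''+1) * mid * ppa K N (i+1) ^ c')
                  * ppa K N (i+3) * ppa K N (i+2)
              = ppa K N (i+2) * ppa K N (i+1) ^ (c''+1)
                  * (mid * ppa K N (i+1) ^ c' * ppa K N (i+3) * ppa K N (i+2)) := by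
                rw [pow_one]; simp only [mul_assoc]
              _ = ppa K N (i+1) ^ c'' * (ppa K N (i+2) * ppa K N (i+1))
                  * (mid * ppa K N (i+1) ^ c' * ppa K N (i+3) * ppa K N (i+2)) := by
                rw [peelP (ppa K N (i+1)) (ppa K N (i+2)) r2 c'']
              _ = ppa K N (i+1) ^ c''
                  * (ppa K N (i+2) * (ppa K N (i+1) * mid * ppa K N (i+1) ^ c')
                      * ppa K N (i+3) * ppa K N (i+2)) := by
                simp only [mul_assoc]
              _ = ppa K N (i+1) ^ c''
                  * (ppa K N (i+3) * (ppa K N (i+2)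
                      * (ppa K N (i+1) * mid * ppa K N (i+1) ^ c')
                      * ppa K N (i+2))) := by rw [fb]
              _ = ppa K N (i+3) * (ppa K N (i+1) ^ c'' * (ppa K N (i+2) * ppa K N (i+1))
                  * (mid * ppa K N (i+1) ^ c' * ppa K N (i+2))) := by
                rw [← mul_assoc, hcz.symm.eq]; simp only [mul_assoc]
              _ = ppa K N (i+3) * (ppa K N (i+2) * ppa K N (i+1) ^ (c''+1)
                  * (mid * ppa K N (i+1) ^ c' * ppa K N (i+2))) := by
                rw [peelP (ppa K N (i+1)) (ppa K N (i+2)) r2 c'']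
              _ = ppa K N (i+3) * (ppa K N (i+2) ^ 1
                  * (ppa K N (i+1) ^ (c''+1) * mid * ppa K N (i+1) ^ c')
                  * ppa K N (i+2)) := by rw [pow_one]; simp only [mul_assoc]
        | succ b'' =>
          -- b = b'' + 2 ≥ 2 : peel a pair (y, x) and use the inductive hypothesis
          have ih := ihb (b''+1) (by omega) c'' c' d e (by omega)
          rw [hG] at ih
          calc ppa K N (i+2) ^ (b''+2) * (ppa K N (i+1) ^ (c''+1) * mid * ppa K N (i+1) ^ c')
                  * ppa K N (i+3) * ppa K N (i+2)
              = ppa K N (i+2) ^ (b''+2) * ppa K N (i+1)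
                  * (ppa K N (i+1) ^ c'' * mid * ppa K N (i+1) ^ c'
                      * ppa K N (i+3) * ppa K N (i+2)) := by
                rw [show ppa K N (i+1) ^ (c''+1) = ppa K N (i+1) * ppa K N (i+1) ^ c''
                  from pow_succ' _ _]
                simp only [mul_assoc]
              _ = ppa K N (i+2) * ppa K N (i+1) * ppa K N (i+2) ^ (b''+1)
                  * (ppa K N (i+1) ^ c'' * mid * ppa K N (i+1) ^ c'
                      * ppa K N (i+3) * ppa K N (i+2)) := by
                rw [apow (ppa K N (i+1)) (ppa K N (i+2)) r1 (b''+1)]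
              _ = ppa K N (i+2) * ppa K N (i+1)
                  * (ppa K N (i+2) ^ (b''+1)
                      * (ppa K N (i+1) ^ c'' * mid * ppa K N (i+1) ^ c')
                      * ppa K N (i+3) * ppa K N (i+2)) := by
                simp only [mul_assoc]
              _ = ppa K N (i+2) * ppa K N (i+1)
                  * (ppa K N (i+3) * (ppa K N (i+2) ^ (b''+1)
                      * (ppa K N (i+1) ^ c'' * mid * ppa K N (i+1) ^ c')
                      * ppa K N (i+2))) := by rw [ih]
              _ = ppa K N (i+2) * ppa K N (i+1) * ppa K N (i+3) * ppa K N (i+2)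
                  * (ppa K N (i+2) ^ b''
                      * (ppa K N (i+1) ^ c'' * mid * ppa K N (i+1) ^ c')
                      * ppa K N (i+2)) := by
                rw [show ppa K N (i+2) ^ (b''+1) = ppa K N (i+2) * ppa K N (i+2) ^ b''
                  from pow_succ' _ _]
                simp only [mul_assoc]
              _ = ppa K N (i+3) * ppa K N (i+2) * ppa K N (i+1) * ppa K N (i+2)
                  * (ppa K N (i+2) ^ b''
                      * (ppa K N (i+1) ^ c'' * mid * ppa K N (i+1) ^ c')
                      * ppa K N (i+2)) := by rw [r4]
              _ = ppa K N (i+3) * (ppa K N (i+2) * ppa K N (i+1) * ppa K N (i+2) ^ (b''+1)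
                  * (ppa K N (i+1) ^ c'' * mid * ppa K N (i+1) ^ c'
                      * ppa K N (i+2))) := by
                rw [show ppa K N (i+2) ^ (b''+1) = ppa K N (i+2) * ppa K N (i+2) ^ b''
                  from pow_succ' _ _]
                simp only [mul_assoc]
              _ = ppa K N (i+3) * (ppa K N (i+2) ^ (b''+2) * ppa K N (i+1)
                  * (ppa K N (i+1) ^ c'' * mid * ppa K N (i+1) ^ c'
                      * ppa K N (i+2))) := by
                rw [apow (ppa K N (i+1)) (ppa K N (i+2)) r1 (b''+1)]
              _ = ppa K N (i+3) * (ppa K N (i+2) ^ (b''+2)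
                  * (ppa K N (i+1) ^ (c''+1) * mid * ppa K N (i+1) ^ c')
                  * ppa K N (i+2)) := by
                rw [show ppa K N (i+1) ^ (c''+1) = ppa K N (i+1) * ppa K N (i+1) ^ c''
                  from pow_succ' _ _]
                simp only [mul_assoc]

lemma incFrom_bot (e : ℕ → ℕ) (k : ℕ) : ∀ m, k < m →
    incFrom K N e k m = ppa K N (k+1) ^ e (k+1) * incFrom K N e (k+1) m := by
  intro m; induction m with
  | zero => intro h; omega
  | succ m ih =>
    intro h
    rcases Nat.lt_or_ge k m with h' | h'
    · rw [incFrom_succ e k m (by omega), incFrom_succ e (k+1) m (by omega), ih h', mul_assoc]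
    · obtain rfl : k = m := by omega
      rw [incFrom_succ e k k le_rfl, incFrom_le e k k le_rfl,
        incFrom_le e (k+1) (k+1) le_rfl, one_mul, mul_one]

lemma mulStep (d e : ℕ → ℕ)
    (hv1 : d 2 ≤ e 1) (hv2 : ∀ i, 3 ≤ i → i ≤ N-1 → d i ≤ d (i-1) + e (i-1))
    (j : ℕ) (hj1 : 1 ≤ j) (hjn : j ≤ N-1) :
    ∃ d' e' : ℕ → ℕ, d' 2 ≤ e' 1 ∧ (∀ i, 3 ≤ i → i ≤ N-1 → d' i ≤ d' (i-1) + e' (i-1)) ∧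
      decP K N d (N-1) * incP K N e (N-1) * ppa K N j
        = decP K N d' (N-1) * incP K N e' (N-1) := by
  by_cases hA : j = N - 1 ∨ e (j+1) = 0
  · -- easy case : just increment e j
    set e' : ℕ → ℕ := fun t => if t = j then e j + 1 else e t with he'
    have he'j : e' j = e j + 1 := by simp [he']
    have hv1' : d 2 ≤ e' 1 := by
      by_cases h1j : 1 = j
      · simp [he', ← h1j]; omega
      · simp [he', h1j]; omega
    refine ⟨d, e', hv1', ?_, ?_⟩
    · intro i h3 hn
      have h1 := hv2 i h3 hn
      by_cases hij : i - 1 = j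
      · rw [hij] at h1 ⊢; simp [he']; omega
      · simp [he', hij]; omega
    · have hcomm : Commute (ppa K N j) (incFrom K N e j (N-1)) := by
        rcases eq_or_lt_of_le hjn with heq | hlt
        · rw [incFrom_le e j (N-1) (by omega)]; exact Commute.one_right _
        · rw [incFrom_bot e j (N-1) hlt]
          have he0 : e (j+1) = 0 := hA.resolve_left (by omega)
          rw [he0, pow_zero, one_mul]
          exact comm_incFrom e j (j+1) hj1 (by omega) (N-1) le_rfl
      have hif : incFrom K N e' j (N-1) = incFrom K N e j (N-1) :=
        incFrom_congr e' e j (N-1) (fun t h1 h2 => by simp [he']; omega)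
      have hip : incP K N e' (j-1) = incP K N e (j-1) :=
        incP_congr e' e (j-1) (fun t h1 h2 => by simp [he']; omega)
      calc decP K N d (N-1) * incP K N e (N-1) * ppa K N j
          = decP K N d (N-1) * (incP K N e j * incFrom K N e j (N-1)) * ppa K N j := by
            rw [← incP_split e (N-1) j hjn]
        _ = decP K N d (N-1) * (incP K N e j * (ppa K N j * incFrom K N e j (N-1))) := by
            simp only [mul_assoc]; rw [hcomm.symm.eq]
        _ = decP K N d (N-1) * (incP K N e (j-1) * (ppa K N j ^ e j * ppa K N j)
              * incFrom K N e j (N-1)) := by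
            rw [incP_succ' e j hj1]; simp only [mul_assoc]
        _ = decP K N d (N-1) * (incP K N e' (j-1) * ppa K N j ^ e' j
              * incFrom K N e' j (N-1)) := by
            rw [hip, hif, he'j, pow_succ]
        _ = decP K N d (N-1) * (incP K N e' j * incFrom K N e' j (N-1)) := by
            rw [incP_succ' e' j hj1]
        _ = decP K N d (N-1) * incP K N e' (N-1) := by rw [← incP_split e' (N-1) j hjn]
  · push_neg at hA
    obtain ⟨hjlt, hene⟩ := hA
    have hjn2 : j + 1 ≤ N - 1 := by omega
    obtain ⟨m, hm⟩ : ∃ m, e (j+1) = m + 1 := ⟨e (j+1) - 1, by omega⟩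
    set d' : ℕ → ℕ := fun t => if t = j+1 then d (j+1) + 1 else d t with hd'
    set e' : ℕ → ℕ := fun t => if t = j then e j + 1 else if t = j+1 then m else e t with he'
    have hval1 : d' 2 ≤ e' 1 := by
      rcases Nat.lt_or_ge j 2 with h | h
      · obtain rfl : j = 1 := by omega
        simp [hd', he']; omega
      · simp [hd', he', show ¬(2 = j + 1) by omega, show ¬(1 = j) by omega,
          show ¬(1 = j+1) by omega, show ¬(j = 0) by omega]; omega
    have hval2 : ∀ i, 3 ≤ i → i ≤ N-1 → d' i ≤ d' (i-1) + e' (i-1) := by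
      intro i h3 hn
      by_cases hi1 : i = j + 1
      · subst hi1
        have h1 := hv2 (j+1) (by omega) (by omega)
        simp only [show j+1-1 = j from rfl] at h1 ⊢
        simp [hd', he', show ¬(j = j+1) by omega]
        omega
      · by_cases hi2 : i = j + 2
        · subst hi2
          have h1 := hv2 (j+2) (by omega) (by omega)
          simp only [show j+2-1 = j+1 from rfl] at h1 ⊢
          simp [hd', he', show ¬(j+2 = j+1) by omega, show ¬(j+1 = j) by omega]
          omega
        · have h1 := hv2 i h3 hn
          simp [hd', he', hi1, show ¬(i-1 = j+1) by omega, show ¬(i-1 = j) by omega]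
          omega
    refine ⟨d', e', hval1, hval2, ?_⟩
    have hF3 : incFrom K N e' (j+1) (N-1) = incFrom K N e (j+1) (N-1) :=
      incFrom_congr e' e (j+1) (N-1) (fun t h1 h2 => by
        simp [he', show t ≠ j by omega, show t ≠ j + 1 by omega])
    rcases Nat.lt_or_ge j 2 with hj2 | hj2
    · -- j = 1
      obtain rfl : j = 1 := by omega
      have r1 : ppa K N 2 * ppa K N 1 * ppa K N 2 = ppa K N 2 * ppa K N 2 * ppa K N 1 :=
        rel_plac1 1 (by omega) (by omega)
      have r2 : ppa K N 1 * ppa K N 2 * ppa K N 1 = ppa K N 2 * ppa K N 1 * ppa K N 1 :=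
        rel_plac2 1 (by omega) (by omega)
      have hcf : Commute (ppa K N 1) (incFrom K N e 2 (N-1)) :=
        comm_incFrom e 1 2 (by omega) (by omega) (N-1) le_rfl
      have hinc : incP K N e (N-1)
          = ppa K N 1 ^ e 1 * ppa K N 2 ^ (m+1) * incFrom K N e 2 (N-1) := by
        rw [incP_split e (N-1) 2 (by omega),
          show incP K N e 2 = incP K N e 0 * ppa K N 1 ^ e 1 * ppa K N 2 ^ e 2 from rfl,
          show incP K N e 0 = 1 from rfl, one_mul, hm]
      have hdec : decP K N d (N-1) = decFrom K N d 2 (N-1) * ppa K N 2 ^ d 2 := by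
        rw [decP_split d (N-1) 2 (by omega) (by omega),
          show decP K N d 2 = ppa K N 2 ^ d 2 * decP K N d 1 from rfl,
          show decP K N d 1 = 1 from rfl, mul_one]
      have hinc' : incP K N e' (N-1)
          = ppa K N 1 ^ (e 1 + 1) * ppa K N 2 ^ m * incFrom K N e 2 (N-1) := by
        rw [incP_split e' (N-1) 2 (by omega),
          show incP K N e' 2 = incP K N e' 0 * ppa K N 1 ^ e' 1 * ppa K N 2 ^ e' 2 from rfl,
          show incP K N e' 0 = 1 from rfl, one_mul, hF3,
          show e' 1 = e 1 + 1 by simp [he'], show e' 2 = m by simp [he']]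
      have hdec' : decP K N d' (N-1) = decFrom K N d 2 (N-1) * ppa K N 2 ^ (d 2 + 1) := by
        rw [decP_split d' (N-1) 2 (by omega) (by omega),
          show decP K N d' 2 = ppa K N 2 ^ d' 2 * decP K N d' 1 from rfl,
          show decP K N d' 1 = 1 from rfl, mul_one,
          decFrom_congr d' d 2 (N-1) (fun t h1 h2 => by simp [hd', show t ≠ 2 by omega]),
          show d' 2 = d 2 + 1 by simp [hd']]
      rw [hinc, hdec, hinc', hdec']
      calc decFrom K N d 2 (N-1) * ppa K N 2 ^ d 2
            * (ppa K N 1 ^ e 1 * ppa K N 2 ^ (m+1) * incFrom K N e 2 (N-1)) * ppa K N 1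
          = decFrom K N d 2 (N-1) * (ppa K N 2 ^ d 2
            * (ppa K N 1 ^ e 1 * (ppa K N 2 ^ (m+1) * (incFrom K N e 2 (N-1) * ppa K N 1)))) := by
            simp only [mul_assoc]
        _ = decFrom K N d 2 (N-1) * (ppa K N 2 ^ d 2
            * (ppa K N 1 ^ e 1 * ppa K N 2 ^ (m+1) * ppa K N 1 * incFrom K N e 2 (N-1))) := by
            rw [hcf.symm.eq]; simp only [mul_assoc]
        _ = decFrom K N d 2 (N-1) * (ppa K N 2 ^ d 2
            * (ppa K N 2 * ppa K N 1 ^ (e 1 + 1) * ppa K N 2 ^ m * incFrom K N e 2 (N-1))) := by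
            rw [Tpow (ppa K N 1) (ppa K N 2) r1 r2 (e 1) m]
        _ = decFrom K N d 2 (N-1) * (ppa K N 2 ^ d 2 * ppa K N 2
            * (ppa K N 1 ^ (e 1 + 1) * ppa K N 2 ^ m * incFrom K N e 2 (N-1))) := by
            simp only [mul_assoc]
        _ = decFrom K N d 2 (N-1) * ppa K N 2 ^ (d 2 + 1)
            * (ppa K N 1 ^ (e 1 + 1) * ppa K N 2 ^ m * incFrom K N e 2 (N-1)) := by
            rw [← pow_succ]; simp only [mul_assoc]
    · -- j ≥ 2
      obtain ⟨i, rfl⟩ : ∃ i, j = i + 2 := ⟨j - 2, by omega⟩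
      have h3 : i + 3 ≤ N - 1 := by omega
      have r1 : ppa K N (i+3) * ppa K N (i+2) * ppa K N (i+3)
          = ppa K N (i+3) * ppa K N (i+3) * ppa K N (i+2) :=
        rel_plac1 (i+2) (by omega) (by omega)
      have r2 : ppa K N (i+2) * ppa K N (i+3) * ppa K N (i+2)
          = ppa K N (i+3) * ppa K N (i+2) * ppa K N (i+2) :=
        rel_plac2 (i+2) (by omega) (by omega)
      have hcf : Commute (ppa K N (i+2)) (incFrom K N e (i+3) (N-1)) :=
        comm_incFrom e (i+2) (i+3) (by omega) (by omega) (N-1) le_rfl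
      obtain ⟨cc, cc', hle, hW⟩ : ∃ cc cc', d (i+2) ≤ cc + cc' ∧
          decP K N d (i+1) * incP K N e (i+1)
            = ppa K N (i+1) ^ cc * (decP K N d i * incP K N e i) * ppa K N (i+1) ^ cc' := by
        rcases i with _ | i'
        · refine ⟨0, e 1, by simpa using hv1, ?_⟩
          show decP K N d 1 * incP K N e 1 = _
          rw [show decP K N d 1 = 1 from rfl,
            show incP K N e 1 = incP K N e 0 * ppa K N 1 ^ e 1 from rfl,
            show incP K N e 0 = 1 from rfl,
            show decP K N d 0 = 1 from rfl]
          simp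
        · refine ⟨d (i'+2), e (i'+2), ?_, ?_⟩
          · have := hv2 (i'+3) (by omega) (by omega)
            simpa [show i'+3-1 = i'+2 from rfl] using this
          · rw [show decP K N d (i'+1+1) = ppa K N (i'+2) ^ d (i'+2) * decP K N d (i'+1) from rfl,
              incP_succ' e (i'+2) (by omega)]
            simp only [show i'+2-1 = i'+1 from rfl]
            simp only [mul_assoc]
      have hinc : incP K N e (N-1)
          = incP K N e (i+1) * ppa K N (i+2) ^ e (i+2) * ppa K N (i+3) ^ (m+1)
              * incFrom K N e (i+3) (N-1) := by
        rw [incP_split e (N-1) (i+3) (by omega),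
          show incP K N e (i+3) = incP K N e (i+2) * ppa K N (i+3) ^ e (i+3) from rfl,
          show incP K N e (i+2) = incP K N e (i+1) * ppa K N (i+2) ^ e (i+2) from rfl, hm]
      have hdec : decP K N d (N-1)
          = decFrom K N d (i+3) (N-1) * ppa K N (i+3) ^ d (i+3)
              * (ppa K N (i+2) ^ d (i+2) * decP K N d (i+1)) := by
        rw [decP_split d (N-1) (i+3) (by omega) (by omega),
          show decP K N d (i+3) = ppa K N (i+3) ^ d (i+3) * decP K N d (i+2) from rfl,
          show decP K N d (i+2) = ppa K N (i+2) ^ d (i+2) * decP K N d (i+1) from rfl]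
        simp only [mul_assoc]
      have hinc' : incP K N e' (N-1)
          = incP K N e (i+1) * ppa K N (i+2) ^ (e (i+2) + 1) * ppa K N (i+3) ^ m
              * incFrom K N e (i+3) (N-1) := by
        rw [incP_split e' (N-1) (i+3) (by omega),
          show incP K N e' (i+3) = incP K N e' (i+2) * ppa K N (i+3) ^ e' (i+3) from rfl,
          show incP K N e' (i+2) = incP K N e' (i+1) * ppa K N (i+2) ^ e' (i+2) from rfl,
          incP_congr e' e (i+1) (fun t h1 h2 => by
            simp [he', show t ≠ i + 2 by omega, show t ≠ i + 3 by omega]), hF3,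
          show e' (i+3) = m by simp [he'],
          show e' (i+2) = e (i+2) + 1 by simp [he']]
      have hdec' : decP K N d' (N-1)
          = decFrom K N d (i+3) (N-1) * ppa K N (i+3) ^ (d (i+3) + 1)
              * (ppa K N (i+2) ^ d (i+2) * decP K N d (i+1)) := by
        rw [decP_split d' (N-1) (i+3) (by omega) (by omega),
          show decP K N d' (i+3) = ppa K N (i+3) ^ d' (i+3) * decP K N d' (i+2) from rfl,
          show decP K N d' (i+2) = ppa K N (i+2) ^ d' (i+2) * decP K N d' (i+1) from rfl,
          decFrom_congr d' d (i+3) (N-1) (fun t h1 h2 => by simp [hd', show t ≠ i + 3 by omega]),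
          decP_congr d' d (i+1) (fun t h1 h2 => by simp [hd', show t ≠ i + 3 by omega]),
          show d' (i+3) = d (i+3) + 1 by simp [hd'],
          show d' (i+2) = d (i+2) by simp [hd']]
        simp only [mul_assoc]
      rw [hinc, hdec, hinc', hdec']
      calc decFrom K N d (i+3) (N-1) * ppa K N (i+3) ^ d (i+3)
            * (ppa K N (i+2) ^ d (i+2) * decP K N d (i+1))
            * (incP K N e (i+1) * ppa K N (i+2) ^ e (i+2) * ppa K N (i+3) ^ (m+1)
                * incFrom K N e (i+3) (N-1)) * ppa K N (i+2)
          = decFrom K N d (i+3) (N-1) * (ppa K N (i+3) ^ d (i+3)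
            * (ppa K N (i+2) ^ d (i+2) * (decP K N d (i+1) * (incP K N e (i+1)
              * (ppa K N (i+2) ^ e (i+2) * (ppa K N (i+3) ^ (m+1)
                * (incFrom K N e (i+3) (N-1) * ppa K N (i+2)))))))) := by
            simp only [mul_assoc]
        _ = decFrom K N d (i+3) (N-1) * (ppa K N (i+3) ^ d (i+3)
            * (ppa K N (i+2) ^ d (i+2) * (decP K N d (i+1) * (incP K N e (i+1)
              * (ppa K N (i+2) ^ e (i+2) * ppa K N (i+3) ^ (m+1) * ppa K N (i+2)
                * incFrom K N e (i+3) (N-1)))))) := by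
            rw [hcf.symm.eq]; simp only [mul_assoc]
        _ = decFrom K N d (i+3) (N-1) * (ppa K N (i+3) ^ d (i+3)
            * (ppa K N (i+2) ^ d (i+2) * (decP K N d (i+1) * (incP K N e (i+1)
              * (ppa K N (i+3) * ppa K N (i+2) ^ (e (i+2) + 1) * ppa K N (i+3) ^ m
                * incFrom K N e (i+3) (N-1)))))) := by
            rw [Tpow (ppa K N (i+2)) (ppa K N (i+3)) r1 r2 (e (i+2)) m]
        _ = decFrom K N d (i+3) (N-1) * (ppa K N (i+3) ^ d (i+3)
            * (ppa K N (i+2) ^ d (i+2) * (decP K N d (i+1) * incP K N e (i+1)) * ppa K N (i+3)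
                * ppa K N (i+2)
              * (ppa K N (i+2) ^ e (i+2) * (ppa K N (i+3) ^ m
                * incFrom K N e (i+3) (N-1))))) := by
            rw [show ppa K N (i+2) ^ (e (i+2) + 1)
                = ppa K N (i+2) * ppa K N (i+2) ^ e (i+2) from pow_succ' _ _]
            simp only [mul_assoc]
        _ = decFrom K N d (i+3) (N-1) * (ppa K N (i+3) ^ d (i+3)
            * (ppa K N (i+2) ^ d (i+2)
                * (ppa K N (i+1) ^ cc * (decP K N d i * incP K N e i) * ppa K N (i+1) ^ cc')
                * ppa K N (i+3) * ppa K N (i+2)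
              * (ppa K N (i+2) ^ e (i+2) * (ppa K N (i+3) ^ m
                * incFrom K N e (i+3) (N-1))))) := by
            rw [hW]
        _ = decFrom K N d (i+3) (N-1) * (ppa K N (i+3) ^ d (i+3)
            * (ppa K N (i+3) * (ppa K N (i+2) ^ d (i+2)
                * (ppa K N (i+1) ^ cc * (decP K N d i * incP K N e i) * ppa K N (i+1) ^ cc')
                * ppa K N (i+2))
              * (ppa K N (i+2) ^ e (i+2) * (ppa K N (i+3) ^ m
                * incFrom K N e (i+3) (N-1))))) := by
            rw [core i h3 (d (i+2)) cc cc' d e hle]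
        _ = decFrom K N d (i+3) (N-1) * (ppa K N (i+3) ^ d (i+3) * ppa K N (i+3)
            * ((ppa K N (i+2) ^ d (i+2)
                * (decP K N d (i+1) * incP K N e (i+1)))
              * (ppa K N (i+2) * ppa K N (i+2) ^ e (i+2) * (ppa K N (i+3) ^ m
                * incFrom K N e (i+3) (N-1))))) := by
            rw [hW]; simp only [mul_assoc]
        _ = decFrom K N d (i+3) (N-1) * ppa K N (i+3) ^ (d (i+3) + 1)
            * (ppa K N (i+2) ^ d (i+2) * decP K N d (i+1))
            * (incP K N e (i+1) * ppa K N (i+2) ^ (e (i+2) + 1) * ppa K N (i+3) ^ m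
                * incFrom K N e (i+3) (N-1)) := by
            rw [← pow_succ, show ppa K N (i+2) ^ (e (i+2) + 1)
                = ppa K N (i+2) * ppa K N (i+2) ^ e (i+2) from pow_succ' _ _]
            simp only [mul_assoc]

lemma incList (e : ℕ → ℕ) : ∀ k,
    ((List.range k).map fun t => ppa K N (t + 1) ^ e (t + 1)).prod = incP K N e k := by
  intro k; induction k with
  | zero => rfl
  | succ k ih =>
    rw [List.range_succ, List.map_append, List.prod_append, ih]
    simp [incP_succ]

lemma decList (d : ℕ → ℕ) : ∀ k, k ≤ N - 2 →
    ((List.range k).map fun t => ppa K N (N - 1 - t) ^ d (N - 1 - t)).prod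
      * decP K N d (N - 1 - k) = decP K N d (N - 1) := by
  intro k; induction k with
  | zero => intro _; simp
  | succ k ih =>
    intro hk
    rw [List.range_succ, List.map_append, List.prod_append]
    have h2 : 2 ≤ N - 1 - k := by omega
    have hstep : decP K N d (N - 1 - k)
        = ppa K N (N - 1 - k) ^ d (N - 1 - k) * decP K N d (N - 1 - (k+1)) := by
      rw [decP_succ d (N - 1 - k) h2, show N - 1 - k - 1 = N - 1 - (k+1) by omega]
    simp only [List.map_cons, List.map_nil, List.prod_cons, List.prod_nil, mul_one, mul_assoc]
    rw [← hstep]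
    exact ih (by omega)

lemma nfMon_eq (hN : 3 ≤ N) (d e : ℕ → ℕ) :
    nfMon K N d e = decP K N d (N - 1) * incP K N e (N - 1) := by
  rw [nfMon, incList e (N - 1)]
  congr 1
  have := decList (K := K) (N := N) d (N - 2) le_rfl
  rw [show N - 1 - (N - 2) = 1 by omega, show decP K N d 1 = 1 from rfl, mul_one] at this
  exact this

lemma incP_zero : ∀ k, incP K N (fun _ => 0) k = 1 := by
  intro k; induction k with
  | zero => rfl
  | succ k ih => rw [incP_succ, ih]; simp

lemma decP_zero : ∀ k, decP K N (fun _ => 0) k = 1 := by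
  intro k
  induction k using Nat.strong_induction_on with
  | _ k ih =>
    match k with
    | 0 => rfl
    | 1 => rfl
    | (k+2) => rw [decP, ih (k+1) (by omega)]; simp

end ParticProof


/-- Every monomial in the partic algebra equals a normal-form monomial
`a_{N-1}^{d_{N-1}} ⋯ a_2^{d_2} a_1^{k_1} ⋯ a_{N-1}^{k_{N-1}}` with `d_2 ≤ k_1` and
`d_i ≤ d_{i-1} + k_{i-1}` for `3 ≤ i ≤ N-1`. -/
theorem stmt7 (K : Type*) [Field K] (N : ℕ) (hN : 3 ≤ N) (l : List ℕ)
    (hl : ∀ x ∈ l, 1 ≤ x ∧ x ≤ N - 1) :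
    ∃ d e : ℕ → ℕ, d 2 ≤ e 1 ∧
      (∀ i, 3 ≤ i → i ≤ N - 1 → d i ≤ d (i - 1) + e (i - 1)) ∧
      (l.map (ppa K N)).prod = nfMon K N d e := by
  revert hl
  induction l using List.reverseRecOn with
  | nil =>
    intro _
    refine ⟨fun _ => 0, fun _ => 0, le_rfl, fun i _ _ => le_rfl, ?_⟩
    rw [ParticProof.nfMon_eq hN, ParticProof.incP_zero, ParticProof.decP_zero]
    simp
  | append_singleton l j ih =>
    intro hl
    have hj := hl j (by simp)
    obtain ⟨d, e, h1, h2, h3⟩ := ih (fun x hx => hl x (by simp [hx]))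
    obtain ⟨d', e', g1, g2, g4⟩ :=
      ParticProof.mulStep (K := K) (N := N) d e h1 h2 j hj.1 hj.2
    refine ⟨d', e', g1, g2, ?_⟩
    rw [List.map_append, List.prod_append, ParticProof.nfMon_eq hN]
    simp only [List.map_cons, List.map_nil, List.prod_cons, List.prod_nil, mul_one]
    rw [h3, ParticProof.nfMon_eq hN]
    exact g4
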